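/- arXiv:1302.2742 — 3 statements merged into one kernel-verified Lean document; each statement's English description precedes it below -/
import Mathlib

section
/- Fix an integer n ≥ 1. As M → ∞ through the positive integers, the integral over x from 0 to 1 of (1/x) · (1 - (1-x)^M) · (1-x)^{n-1} dx is asymptotic to log M; that is, the ratio of this integral to log M converges to 1. -/
open Filter

open MeasureTheory intervalIntegral in

lemma integral_eq_sum (n M : ℕ) (hn : 1 ≤ n) :
    (∫ x in (0:ℝ)..1, (1 / x) * (1 - (1 - x) ^ M) * (1 - x) ^ (n - 1))
      = ∑ k ∈ Finset.range M, (1:ℝ) / (k + n) := by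
  have h1 : (∫ x in (0:ℝ)..1, (1 / x) * (1 - (1 - x) ^ M) * (1 - x) ^ (n - 1))
      = ∫ x in (0:ℝ)..1, ∑ k ∈ Finset.range M, (1 - x) ^ (k + (n - 1)) := by
    apply intervalIntegral.integral_congr_ae
    filter_upwards with x hx
    rw [Set.uIoc_of_le (by norm_num : (0:ℝ) ≤ 1)] at hx
    have hx0 : x ≠ 0 := ne_of_gt hx.1
    have hne : (1 - x : ℝ) ≠ 1 := by intro h; apply hx0; linarith
    have hgeom : ∑ i ∈ Finset.range M, (1 - x) ^ i = (1 - (1 - x) ^ M) / x := by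
      rw [geom_sum_eq hne]
      field_simp
      ring
    calc (1 / x) * (1 - (1 - x) ^ M) * (1 - x) ^ (n - 1)
        = (∑ i ∈ Finset.range M, (1 - x) ^ i) * (1 - x) ^ (n - 1) := by
          rw [hgeom]; ring
      _ = ∑ k ∈ Finset.range M, (1 - x) ^ (k + (n - 1)) := by
          rw [Finset.sum_mul]; simp [pow_add]
  rw [h1, intervalIntegral.integral_finset_sum]
  · apply Finset.sum_congr rfl
    intro k hk
    rw [intervalIntegral.integral_comp_sub_left (fun x => x ^ (k + (n-1))) 1]
    norm_num
    rw [Nat.cast_sub hn]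
    push_cast
    ring_nf
  · intro k hk
    exact (Continuous.intervalIntegrable (by continuity) 0 1)

lemma sum_eq_harmonic (n : ℕ) (hn : 1 ≤ n) (M : ℕ) :
    ∑ k ∈ Finset.range M, (1:ℝ) / (k + n)
      = (harmonic (M + (n-1)) : ℝ) - (harmonic (n-1) : ℝ) := by
  induction M with
  | zero => simp
  | succ M ih =>
    rw [Finset.sum_range_succ, ih, show M + 1 + (n-1) = (M + (n-1)) + 1 by omega,
      harmonic_succ]
    push_cast [Nat.cast_sub hn]
    ring

lemma key_tendsto (n : ℕ) (hn : 1 ≤ n) :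
    Tendsto (fun M : ℕ => (∑ k ∈ Finset.range M, (1:ℝ) / (k + n)) - Real.log M)
      atTop (nhds (Real.eulerMascheroniConstant - (harmonic (n-1) : ℝ))) := by
  have hA : Tendsto (fun M : ℕ => (harmonic (M + (n-1)) : ℝ) - Real.log ((M + (n-1) : ℕ)))
      atTop (nhds Real.eulerMascheroniConstant) :=
    Real.tendsto_harmonic_sub_log.comp (tendsto_add_atTop_nat (n-1))
  have hB : Tendsto (fun M : ℕ => Real.log ((M + (n-1) : ℕ)) - Real.log M)
      atTop (nhds 0) := by
    have h1 : Tendsto (fun M : ℕ => 1 + ((n:ℝ)-1) * (1/M)) atTop (nhds 1) := by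
      have := (tendsto_one_div_atTop_nhds_zero_nat.const_mul ((n:ℝ)-1)).const_add 1
      simpa using this
    have hlog : Tendsto (fun M : ℕ => Real.log (1 + ((n:ℝ)-1) * (1/M))) atTop (nhds 0) := by
      have := (Real.continuousAt_log one_ne_zero).tendsto.comp h1
      simpa [Function.comp_def] using this
    apply hlog.congr'
    filter_upwards [eventually_ge_atTop 1] with M hM
    have hM0 : (M:ℝ) ≠ 0 := Nat.cast_ne_zero.mpr (by omega)
    have : (1 + ((n:ℝ)-1) * (1/M)) = ((M + (n-1) : ℕ) : ℝ) / M := by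
      push_cast [Nat.cast_sub hn]
      field_simp
    have hnum : ((M + (n-1) : ℕ) : ℝ) ≠ 0 := Nat.cast_ne_zero.mpr (by omega)
    rw [this, Real.log_div hnum hM0]
  have h2 := (hA.add hB).sub (tendsto_const_nhds (x := (harmonic (n-1) : ℝ)))
  rw [add_zero] at h2
  apply h2.congr'
  filter_upwards with M
  rw [sum_eq_harmonic n hn]
  push_cast
  ring


/-- For fixed `n ≥ 1`, as `M → ∞` through the positive integers, the integral over `x` from
0 to 1 of `(1/x)(1 - (1-x)^M)(1-x)^(n-1)` is asymptotic to `log M`. -/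
theorem integral_singleton_term_asymptotic (n : ℕ) (hn : 1 ≤ n) :
    Tendsto
      (fun M : ℕ =>
        (∫ x in (0:ℝ)..1, (1 / x) * (1 - (1 - x) ^ M) * (1 - x) ^ (n - 1)) / Real.log M)
      atTop (nhds 1) := by
  have hlogM : Tendsto (fun M : ℕ => Real.log M) atTop atTop :=
    Real.tendsto_log_atTop.comp tendsto_natCast_atTop_atTop
  have h0 : Tendsto
      (fun M : ℕ => ((∑ k ∈ Finset.range M, (1:ℝ) / (k + n)) - Real.log M) / Real.log M)
      atTop (nhds 0) :=
    (key_tendsto n hn).div_atTop hlogM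
  have h1 := h0.add (tendsto_const_nhds (x := (1:ℝ)))
  rw [zero_add] at h1
  apply h1.congr'
  filter_upwards [eventually_ge_atTop 2] with M hM
  have hlog : Real.log M ≠ 0 := by
    have : (2:ℝ) ≤ M := by exact_mod_cast hM
    have := Real.log_pos (by linarith)
    linarith
  rw [integral_eq_sum n M hn]
  field_simp
  ring
end

section
/- Fix an integer n ≥ 1. As M → ∞, the quantity Σ_{k=1}^M n k / ((n+k)(n+k-1)) - n log M converges to n(ρ - H_n) - (n-1), where ρ is the Euler–Mascheroni constant and H_n is the n-th harmonic number. -/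
open Filter

lemma sum_closed_form (n : ℕ) (hn : 1 ≤ n) (M : ℕ) :
    (∑ k ∈ Finset.Icc 1 M, (n * k : ℝ) / ((n + k) * (n + k - 1)))
      = n * (harmonic (n + M) : ℝ) + n * (n - 1) / (n + M)
        - n * (harmonic n : ℝ) - (n - 1) := by
  induction M with
  | zero =>
      simp only [Finset.Icc_self, Nat.cast_zero, add_zero]
      have hn0 : (n : ℝ) ≠ 0 := by positivity
      rw [show Finset.Icc 1 0 = (∅ : Finset ℕ) by decide]
      field_simp
      rw [Finset.sum_empty]
      ring
  | succ M ih =>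
      rw [Finset.sum_Icc_succ_top (by omega), ih]
      have h1 : (n : ℝ) + M ≠ 0 := by positivity
      have h2 : (n : ℝ) + (M + 1) ≠ 0 := by positivity
      have h3 : (n : ℝ) + (M + 1) - 1 = (n : ℝ) + M := by ring
      have h4 : (harmonic (n + (M + 1)) : ℝ) = (harmonic (n + M) : ℝ) + ((n : ℝ) + (M + 1))⁻¹ := by
        rw [show n + (M + 1) = (n + M) + 1 by ring, harmonic_succ]
        push_cast
        ring
      push_cast
      rw [show ((n : ℝ) + (M + 1)) = (n : ℝ) + M + 1 by ring] at h2 ⊢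
      rw [show (n : ℝ) + (↑M + 1) = (n : ℝ) + M + 1 by ring] at h4
      rw [h4]
      field_simp
      have h5 : ((n:ℝ) + M)⁻¹ * ((n:ℝ) + M) = 1 := inv_mul_cancel₀ h1
      linear_combination (n:ℝ) * (1 + M) * h5

set_option maxHeartbeats 1000000 in
/-- For fixed `n ≥ 1`, `Σ_{k=1}^M n k / ((n+k)(n+k-1)) - n log M` converges, as `M → ∞`,
to `n(ρ - H_n) - (n-1)` where `ρ` is the Euler–Mascheroni constant and `H_n` the `n`-th
harmonic number. -/
theorem sum_singleton_asymptotic (n : ℕ) (hn : 1 ≤ n) :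
    Tendsto
      (fun M : ℕ =>
        (∑ k ∈ Finset.Icc 1 M, (n * k : ℝ) / ((n + k) * (n + k - 1))) - n * Real.log M)
      atTop
      (nhds (n * (Real.eulerMascheroniConstant - (harmonic n : ℝ)) - (n - 1))) := by
  have key : ∀ᶠ M : ℕ in atTop,
      (∑ k ∈ Finset.Icc 1 M, (n * k : ℝ) / ((n + k) * (n + k - 1))) - n * Real.log M
        = n * ((harmonic (n + M) : ℝ) - Real.log (n + M))
          + n * (Real.log ((n : ℝ) + M) - Real.log M)
          + n * (n - 1) / (n + M)
          - n * (harmonic n : ℝ) - (n - 1) := by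
    filter_upwards [eventually_ge_atTop 1] with M hM
    rw [sum_closed_form n hn M]
    ring
  rw [tendsto_congr' key]
  have t1 : Tendsto (fun M : ℕ => (n : ℝ) * ((harmonic (n + M) : ℝ) - Real.log (n + M)))
      atTop (nhds (n * Real.eulerMascheroniConstant)) := by
    apply Tendsto.const_mul
    have hcomp : Tendsto (fun M : ℕ => n + M) atTop atTop :=
      tendsto_atTop_mono (fun M => Nat.le_add_left M n) tendsto_id
    have := Real.tendsto_harmonic_sub_log.comp hcomp
    refine this.congr fun M => ?_
    simp only [Function.comp_apply]
    push_cast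
    ring
  have t2 : Tendsto (fun M : ℕ => (n : ℝ) * (Real.log ((n : ℝ) + M) - Real.log M))
      atTop (nhds (n * 0)) := by
    apply Tendsto.const_mul
    have hlim : Tendsto (fun M : ℕ => ((n : ℝ) + M) / M) atTop (nhds 1) := by
      have : Tendsto (fun M : ℕ => (n : ℝ) / M + 1) atTop (nhds (0 + 1)) :=
        (tendsto_const_nhds.div_atTop tendsto_natCast_atTop_atTop).add tendsto_const_nhds
      rw [zero_add] at this
      refine this.congr' ?_
      filter_upwards [eventually_gt_atTop 0] with M hM
      have : (M : ℝ) ≠ 0 := by positivity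
      field_simp
    have hcont : Tendsto (fun M : ℕ => Real.log (((n : ℝ) + M) / M)) atTop (nhds 0) := by
      have := (Real.continuousAt_log (by norm_num : (1:ℝ) ≠ 0)).tendsto.comp hlim
      simpa [Function.comp_def] using this
    refine hcont.congr' ?_
    filter_upwards [eventually_gt_atTop 0] with M hM
    rw [Real.log_div (by positivity) (by positivity : (M:ℝ) ≠ 0)]
  have t3 : Tendsto (fun M : ℕ => (n : ℝ) * (n - 1) / (n + M)) atTop (nhds 0) := by
    apply tendsto_const_nhds.div_atTop
    exact tendsto_atTop_add_const_left atTop _ tendsto_natCast_atTop_atTop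
  have h := (((t1.add t2).add t3).sub_const ((n : ℝ) * (harmonic n : ℝ))).sub_const ((n : ℝ) - 1)
  have heq : (n : ℝ) * Real.eulerMascheroniConstant + (n : ℝ) * 0 + 0
      - (n : ℝ) * (harmonic n : ℝ) - ((n : ℝ) - 1)
      = (n : ℝ) * (Real.eulerMascheroniConstant - (harmonic n : ℝ)) - ((n : ℝ) - 1) := by ring
  rw [heq] at h
  exact h
end

section
/- For real numbers γ > 0 and c with 0 < c ≤ 1, the integral over t from 0 to ∞ of exp(-c(e^{γ t} - 1)) dt is at least (1/γ)(log(1/c) - 1). -/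
open Real MeasureTheory

/-- For `γ > 0` and `0 < c ≤ 1`,
`∫_0^∞ exp(-c(e^{γt} - 1)) dt ≥ (1/γ)(log(1/c) - 1)`. -/
theorem integral_coalescent_survival_lower_bound (γ c : ℝ) (hγ : 0 < γ) (hc : 0 < c)
    (hc1 : c ≤ 1) :
    (1 / γ) * (Real.log (1 / c) - 1) ≤
      ∫ t in Set.Ioi (0:ℝ), Real.exp (-c * (Real.exp (γ * t) - 1)) := by
  set T : ℝ := Real.log (1 / c) / γ with hTdef
  have hc' : (0:ℝ) < 1 / c := by positivity
  have hlog : 0 ≤ Real.log (1 / c) := Real.log_nonneg (by rw [le_div_iff₀ hc]; linarith)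
  have hT0 : 0 ≤ T := div_nonneg hlog hγ.le
  have hγT : γ * T = Real.log (1 / c) := by
    rw [hTdef, mul_div_assoc']; exact mul_div_cancel_left₀ _ hγ.ne'
  have hexpT : Real.exp (γ * T) = 1 / c := by rw [hγT, Real.exp_log hc']
  have hf_int : IntegrableOn (fun t => Real.exp (-c * (Real.exp (γ * t) - 1)))
      (Set.Ioi (0:ℝ)) := by
    apply Integrable.mono' (exp_neg_integrableOn_Ioi 0 (mul_pos hc hγ))
    · apply Continuous.aestronglyMeasurable
      continuity
    · filter_upwards [ae_restrict_mem measurableSet_Ioi] with t ht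
      rw [Real.norm_eq_abs, Real.abs_exp, Real.exp_le_exp]
      nlinarith [Real.add_one_le_exp (γ * t)]
  have hg_cont : Continuous (fun t : ℝ => 1 + c - c * Real.exp (γ * t)) := by continuity
  have step1 : ∫ t in Set.Ioc (0:ℝ) T, (1 + c - c * Real.exp (γ * t)) ≤
      ∫ t in Set.Ioi (0:ℝ), Real.exp (-c * (Real.exp (γ * t) - 1)) := by
    have h1 : ∫ t in Set.Ioc (0:ℝ) T, (1 + c - c * Real.exp (γ * t)) ≤
        ∫ t in Set.Ioc (0:ℝ) T, Real.exp (-c * (Real.exp (γ * t) - 1)) := by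
      apply setIntegral_mono_on
      · exact hg_cont.integrableOn_Ioc
      · exact hf_int.mono_set Set.Ioc_subset_Ioi_self
      · exact measurableSet_Ioc
      · intro t _
        have := Real.add_one_le_exp (-c * (Real.exp (γ * t) - 1))
        linarith
    refine h1.trans (setIntegral_mono_set hf_int ?_ ?_)
    · filter_upwards with t using (Real.exp_pos _).le
    · exact Filter.Eventually.of_forall Set.Ioc_subset_Ioi_self
  have hval : ∫ t in Set.Ioc (0:ℝ) T, (1 + c - c * Real.exp (γ * t)) =
      (1 + c) * T - c * (γ⁻¹ * (Real.exp (γ * T) - 1)) := by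
    rw [← intervalIntegral.integral_of_le hT0]
    have hexpint : IntervalIntegrable (fun t : ℝ => c * Real.exp (γ * t)) volume 0 T :=
      (Continuous.intervalIntegrable (by continuity) 0 T)
    have hconst : IntervalIntegrable (fun _ : ℝ => 1 + c) volume 0 T :=
      intervalIntegrable_const
    rw [intervalIntegral.integral_sub hconst hexpint,
        intervalIntegral.integral_const, intervalIntegral.integral_const_mul]
    have : ∫ t in (0:ℝ)..T, Real.exp (γ * t) = γ⁻¹ * (Real.exp (γ * T) - 1) := by
      rw [intervalIntegral.integral_comp_mul_left (fun x => Real.exp x) hγ.ne',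
          integral_exp]
      simp [mul_comm]
    rw [this]
    simp [smul_eq_mul, mul_comm]
  have hfinal : (1 / γ) * (Real.log (1 / c) - 1) ≤
      (1 + c) * T - c * (γ⁻¹ * (Real.exp (γ * T) - 1)) := by
    rw [hexpT]
    have h2 : c * (γ⁻¹ * (1 / c - 1)) = (1 - c) / γ := by
      field_simp
    rw [h2, hTdef]
    have hcT : 0 ≤ c * (Real.log (1 / c) / γ) := by positivity
    have h3 : (1 - c) / γ ≤ 1 / γ := by
      gcongr
      linarith
    have h4 : (1 / γ) * (Real.log (1 / c) - 1) = Real.log (1 / c) / γ - 1 / γ := by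
      field_simp
    nlinarith
  calc (1 / γ) * (Real.log (1 / c) - 1) ≤ _ := hfinal
    _ = ∫ t in Set.Ioc (0:ℝ) T, (1 + c - c * Real.exp (γ * t)) := hval.symm
    _ ≤ _ := step1
end
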